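/- There do not exist four positive integers x, y, z, t such that x² + y² = z² and x·y = 2·t². In other words, no right triangle with integer sides has a square as its area (Diophantus' 20th problem). -/

import Mathlib

lemma dio_sqmod4 (a : ℤ) : a * a % 4 = 0 ∨ a * a % 4 = 1 := by
  rcases Int.even_or_odd a with ⟨k, rfl⟩ | ⟨k, rfl⟩
  · left
    have h : (k + k) * (k + k) = 4 * (k * k) := by ring
    rw [h]; exact Int.mul_emod_right 4 (k * k)
  · right
    have h : (2 * k + 1) * (2 * k + 1) = 1 + 4 * (k * k + k) := by ring
    rw [h]; simp [Int.add_mul_emod_self_left]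

lemma dio_pos_sq {a c : ℤ} (h : a = c ^ 2 ∨ a = -c ^ 2) (ha : 0 < a) :
    ∃ d : ℤ, 0 < d ∧ a = d * d := by
  rcases h with h | h
  · refine ⟨|c|, ?_, by rw [h, sq]; rw [abs_mul_abs_self]⟩
    rcases eq_or_ne c 0 with rfl | hc
    · simp at h; omega
    · exact abs_pos.mpr hc
  · exfalso; nlinarith [sq_nonneg c]

/-- The descent step for a primitive solution with `x` odd. -/
lemma dio_step {x y z t : ℤ} (hx : 0 < x) (hy : 0 < y) (hz : 0 < z) (ht : 0 < t)
    (h1 : x * x + y * y = z * z) (h2 : x * y = 2 * (t * t))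
    (hco : Int.gcd x y = 1) (hxodd : x % 2 = 1) :
    ∃ x' y' z' t' : ℤ, 0 < x' ∧ 0 < y' ∧ 0 < z' ∧ 0 < t' ∧
      x' * x' + y' * y' = z' * z' ∧ x' * y' = 2 * (t' * t') ∧ z'.natAbs < z.natAbs := by
  have hpt : PythagoreanTriple x y z := h1
  obtain ⟨m, n, hx1, hy1, hz1, hmn, hpar, hm0⟩ :=
    hpt.coprime_classification' hco hxodd hz
  -- basic positivity
  have hmpos : 0 < m := by
    rcases lt_or_eq_of_le hm0 with h | h
    · exact h
    · exfalso; rw [← h] at hy1; simp at hy1; omega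
  have hnpos : 0 < n := by nlinarith
  have hmn' : n < m := by nlinarith
  -- area equation
  have harea : m * n * ((m - n) * (m + n)) = t ^ 2 := by
    have h4 : 2 * (m * n * ((m - n) * (m + n))) = 2 * t ^ 2 := by
      rw [hx1, hy1] at h2; linear_combination h2
    have h5 := mul_left_cancel₀ (two_ne_zero (α := ℤ)) h4
    linarith [h5]
  -- coprimality facts
  have hcmn : IsCoprime m n := Int.isCoprime_iff_gcd_eq_one.mpr hmn
  have codd : IsCoprime (m - n) (m + n) := by
    rw [Int.isCoprime_iff_gcd_eq_one]
    set d := Int.gcd (m - n) (m + n) with hdd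
    have hd1 : (d : ℤ) ∣ (m - n) := Int.gcd_dvd_left _ _
    have hd2 : (d : ℤ) ∣ (m + n) := Int.gcd_dvd_right _ _
    have hdm : (d : ℤ) ∣ 2 * m := by
      have e : 2 * m = (m - n) + (m + n) := by ring
      rw [e]; exact dvd_add hd1 hd2
    have hdn : (d : ℤ) ∣ 2 * n := by
      have e : 2 * n = (m + n) - (m - n) := by ring
      rw [e]; exact dvd_sub hd2 hd1
    have hdvd2 : d ∣ 2 := by
      have h := Int.dvd_gcd hdm hdn
      rw [Int.gcd_mul_left, hmn, mul_one] at h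
      exact_mod_cast (by simpa using h : d ∣ 2)
    rcases (Nat.prime_two).eq_one_or_self_of_dvd d hdvd2 with h | h
    · exact h
    · exfalso
      rw [h] at hd2
      obtain ⟨k, hk⟩ := hd2
      push_cast at hk
      omega
  have c1 : IsCoprime m (m - n) := by
    have h := (hcmn.neg_right).add_mul_right_right 1
    have e : -n + 1 * m = m - n := by ring
    rwa [e] at h
  have c2 : IsCoprime m (m + n) := by
    have h := hcmn.add_mul_right_right 1
    have e : n + 1 * m = m + n := by ring
    rwa [e] at h
  have c3 : IsCoprime n (m - n) := by
    have h := (hcmn.symm).add_mul_right_right (-1)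
    have e : m + -1 * n = m - n := by ring
    rwa [e] at h
  have c4 : IsCoprime n (m + n) := by
    have h := (hcmn.symm).add_mul_right_right 1
    have e : m + 1 * n = m + n := by ring
    rwa [e] at h
  have cbig : IsCoprime (m * n) ((m - n) * (m + n)) :=
    ((c1.mul_right c2).mul_left (c3.mul_right c4))
  -- extract squares
  obtain ⟨a, ha⟩ := Int.sq_of_isCoprime cbig harea
  obtain ⟨A, hApos, hAe⟩ := dio_pos_sq ha (mul_pos hmpos hnpos)
  obtain ⟨b, hb'⟩ := Int.sq_of_isCoprime cbig.symm
    (show (m - n) * (m + n) * (m * n) = t ^ 2 by linear_combination harea)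
  obtain ⟨B, hBpos, hBe⟩ :=
    dio_pos_sq hb' (mul_pos (by omega : (0:ℤ) < m - n) (by omega : (0:ℤ) < m + n))
  obtain ⟨p', hp'⟩ := Int.sq_of_isCoprime hcmn (show m * n = A ^ 2 by rw [sq]; exact hAe)
  obtain ⟨p, hppos, hpe⟩ := dio_pos_sq hp' hmpos
  obtain ⟨q', hq'⟩ := Int.sq_of_isCoprime hcmn.symm
    (show n * m = A ^ 2 by rw [sq, ← hAe]; ring)
  obtain ⟨q, hqpos, hqe⟩ := dio_pos_sq hq' hnpos
  obtain ⟨s', hs'⟩ := Int.sq_of_isCoprime codd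
    (show (m - n) * (m + n) = B ^ 2 by rw [sq]; exact hBe)
  obtain ⟨s, hspos, hse⟩ := dio_pos_sq hs' (by omega)
  obtain ⟨r', hr'⟩ := Int.sq_of_isCoprime codd.symm
    (show (m + n) * (m - n) = B ^ 2 by rw [sq, ← hBe]; ring)
  obtain ⟨r, hrpos, hre⟩ := dio_pos_sq hr' (by omega)
  -- parity: rule out m even
  rcases hpar with ⟨hme, hno⟩ | ⟨hmo, hne⟩
  · exfalso
    have f1 := dio_sqmod4 p
    have f2 := dio_sqmod4 q
    have f3 := dio_sqmod4 s
    rw [← hpe] at f1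
    rw [← hqe] at f2
    rw [← hse] at f3
    omega
  -- main case: m odd, n even
  · have hqeven : q % 2 = 0 := by
      have hn2 : Even n := by rw [Int.even_iff]; omega
      rw [hqe] at hn2
      rcases Int.even_mul.mp hn2 with h | h <;>
        · rw [Int.even_iff] at h; omega
    obtain ⟨w, rfl⟩ : ∃ w, q = w + w := ⟨q / 2, by omega⟩
    have hrodd : r % 2 = 1 := by
      rcases Int.even_or_odd r with ⟨k, hk⟩ | hodd
      · exfalso
        have e : m + n = 2 * (2 * (k * k)) := by rw [hre, hk]; ring
        omega
      · obtain ⟨k, hk⟩ := hodd; omega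
    have hsodd : s % 2 = 1 := by
      rcases Int.even_or_odd s with ⟨k, hk⟩ | hodd
      · exfalso
        have e : m - n = 2 * (2 * (k * k)) := by rw [hse, hk]; ring
        omega
      · obtain ⟨k, hk⟩ := hodd; omega
    have hss : s * s < r * r := by linarith
    have hrs : s < r := by
      by_contra hcon
      push_neg at hcon
      have := mul_le_mul hcon hcon hrpos.le hspos.le
      linarith
    obtain ⟨u, v, hru, hsv⟩ : ∃ u v, r = u + v ∧ s = u - v :=
      ⟨(r + s) / 2, (r - s) / 2, by omega, by omega⟩
    subst hru
    subst hsv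
    have hupos : 0 < u := by omega
    have hvpos : 0 < v := by omega
    have hwpos : 0 < w := by omega
    refine ⟨u, v, p, w, hupos, hvpos, hppos, hwpos, ?_, ?_, ?_⟩
    · have h4 : 2 * (u * u + v * v) = 2 * (p * p) := by
        linear_combination -hre - hse + 2 * hpe
      exact mul_left_cancel₀ (two_ne_zero (α := ℤ)) h4
    · have h4 : (4 : ℤ) * (u * v) = 4 * (2 * (w * w)) := by
        linear_combination -hre + hse + 2 * hqe
      exact mul_left_cancel₀ (by norm_num : (4 : ℤ) ≠ 0) h4
    · have e1 : p ≤ p * p := by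
        have := mul_le_mul_of_nonneg_right (show (1:ℤ) ≤ p from hppos) hppos.le
        linarith
      have e2 : m ≤ m * m := by
        have := mul_le_mul_of_nonneg_right (show (1:ℤ) ≤ m from hmpos) hmpos.le
        linarith
      have e3 : z = m * m + n * n := by rw [hz1]; ring
      have e4 : 0 < n * n := mul_pos hnpos hnpos
      have : p < z := by linarith [hpe]
      omega

lemma dio_nat_helper (g t : ℕ) (h : g ^ 2 ∣ 2 * t ^ 2) : g ∣ t := by
  rcases Nat.eq_zero_or_pos g with rfl | hg
  · have h0 : 2 * t ^ 2 = 0 := by simpa using h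
    have : t = 0 := by nlinarith
    simp [this]
  have hd : 0 < Nat.gcd g t := Nat.gcd_pos_of_pos_left t hg
  obtain ⟨g₁, hgd⟩ : Nat.gcd g t ∣ g := Nat.gcd_dvd_left g t
  obtain ⟨t₁, htd⟩ : Nat.gcd g t ∣ t := Nat.gcd_dvd_right g t
  set d := Nat.gcd g t with hdd
  have cop : Nat.Coprime g₁ t₁ := by
    have e1 : g₁ = g / d := by rw [hgd]; exact (Nat.mul_div_cancel_left _ hd).symm
    have e2 : t₁ = t / d := by rw [htd]; exact (Nat.mul_div_cancel_left _ hd).symm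
    rw [e1, e2]; exact Nat.coprime_div_gcd_div_gcd hd
  have h2 : d ^ 2 * g₁ ^ 2 ∣ d ^ 2 * (2 * t₁ ^ 2) := by
    have e1 : d ^ 2 * g₁ ^ 2 = g ^ 2 := by rw [hgd]; ring
    have e2 : d ^ 2 * (2 * t₁ ^ 2) = 2 * t ^ 2 := by rw [htd]; ring
    rw [e1, e2]; exact h
  have h3 : g₁ ^ 2 ∣ 2 * t₁ ^ 2 :=
    (Nat.mul_dvd_mul_iff_left (pow_pos hd 2)).mp h2
  have h4 : g₁ ^ 2 ∣ 2 := (Nat.Coprime.pow 2 2 cop).dvd_of_dvd_mul_right h3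
  have h5 : g₁ ^ 2 ≤ 2 := Nat.le_of_dvd (by norm_num) h4
  have h6 : g₁ ≤ 1 := by nlinarith
  have h7 : g₁ ≠ 0 := by
    intro h0
    rw [h0, mul_zero] at hgd
    omega
  have h8 : g₁ = 1 := by omega
  rw [h8, mul_one] at hgd
  rw [hgd]
  exact Nat.gcd_dvd_right g t

/-- The main descent: no solution with hypotenuse of any size. -/
lemma dio_main : ∀ N : ℕ, ∀ x y z t : ℤ, 0 < x → 0 < y → 0 < z → 0 < t →
    x * x + y * y = z * z → x * y = 2 * (t * t) → z.natAbs = N → False := by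
  intro N
  induction N using Nat.strong_induction_on with
  | _ N ih =>
    intro x y z t hx hy hz ht h1 h2 hzN
    by_cases hg1 : Int.gcd x y = 1
    · -- coprime case: one of x, y is odd
      have hnotboth : x % 2 = 1 ∨ y % 2 = 1 := by
        by_contra hcon
        push_neg at hcon
        have hx2 : (2:ℤ) ∣ x := Int.dvd_of_emod_eq_zero (by omega)
        have hy2 : (2:ℤ) ∣ y := Int.dvd_of_emod_eq_zero (by omega)
        have := Int.dvd_gcd hx2 hy2
        rw [hg1] at this
        norm_num at this
      rcases hnotboth with hodd | hodd
      · obtain ⟨x', y', z', t', hx', hy', hz', ht', h1', h2', hlt⟩ :=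
          dio_step hx hy hz ht h1 h2 hg1 hodd
        exact ih z'.natAbs (hzN ▸ hlt) x' y' z' t' hx' hy' hz' ht' h1' h2' rfl
      · obtain ⟨x', y', z', t', hx', hy', hz', ht', h1', h2', hlt⟩ :=
          dio_step hy hx hz ht (by linarith) (by linarith [h2, mul_comm x y])
            (by rwa [Int.gcd_comm]) hodd
        exact ih z'.natAbs (hzN ▸ hlt) x' y' z' t' hx' hy' hz' ht' h1' h2' rfl
    · -- non-primitive: divide by the gcd
      set g := Int.gcd x y with hgdef
      have hgpos : 0 < g := Int.gcd_pos_of_ne_zero_left y hx.ne'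
      have hg2 : 2 ≤ g := by omega
      have hgx : (g:ℤ) ∣ x := Int.gcd_dvd_left _ _
      have hgy : (g:ℤ) ∣ y := Int.gcd_dvd_right _ _
      have hgz : (g:ℤ) ∣ z := (show PythagoreanTriple x y z from h1).gcd_dvd
      have hgt : (g:ℤ) ∣ t := by
        have hdvd : ((g:ℤ))^2 ∣ x * y := by rw [sq]; exact mul_dvd_mul hgx hgy
        rw [h2] at hdvd
        have hnat : g ^ 2 ∣ 2 * t.natAbs ^ 2 := by
          have h3 := Int.natAbs_dvd_natAbs.mpr hdvd
          have e1 : ((g:ℤ)^2).natAbs = g ^ 2 := by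
            rw [Int.natAbs_pow]; simp
          have e2 : (2 * (t * t)).natAbs = 2 * t.natAbs ^ 2 := by
            rw [Int.natAbs_mul, Int.natAbs_mul]; simp [sq]
          rwa [e1, e2] at h3
        have h5 := dio_nat_helper g t.natAbs hnat
        have h6 : (g:ℤ) ∣ (t.natAbs : ℤ) := Int.natCast_dvd_natCast.mpr h5
        rwa [Int.natAbs_of_nonneg ht.le] at h6
      clear_value g
      clear hgdef hg1
      obtain ⟨a, rfl⟩ := hgx
      obtain ⟨b, rfl⟩ := hgy
      obtain ⟨c, rfl⟩ := hgz
      obtain ⟨d, rfl⟩ := hgt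
      have hgz' : (0:ℤ) < g := by exact_mod_cast hgpos
      have ha : 0 < a := by
        rcases mul_pos_iff.mp hx with ⟨_, h⟩ | ⟨h, _⟩
        · exact h
        · exfalso; omega
      have hb : 0 < b := by
        rcases mul_pos_iff.mp hy with ⟨_, h⟩ | ⟨h, _⟩
        · exact h
        · exfalso; omega
      have hc : 0 < c := by
        rcases mul_pos_iff.mp hz with ⟨_, h⟩ | ⟨h, _⟩
        · exact h
        · exfalso; omega
      have hd : 0 < d := by
        rcases mul_pos_iff.mp ht with ⟨_, h⟩ | ⟨h, _⟩
        · exact h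
        · exfalso; omega
      have e1 : a * a + b * b = c * c := by
        have h4 : (g:ℤ) * (g:ℤ) * (a * a + b * b) = (g:ℤ) * (g:ℤ) * (c * c) := by
          linear_combination h1
        exact mul_left_cancel₀ (by positivity) h4
      have e2 : a * b = 2 * (d * d) := by
        have h4 : (g:ℤ) * (g:ℤ) * (a * b) = (g:ℤ) * (g:ℤ) * (2 * (d * d)) := by
          linear_combination h2
        exact mul_left_cancel₀ (by positivity) h4
      have hlt : c.natAbs < N := by
        have : c < (g:ℤ) * c := by
          nlinarith
        have hcz : c < (g:ℤ) * c := this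
        omega
      exact ih c.natAbs hlt a b c d ha hb hc hd e1 e2 rfl

/-- Diophantus' 20th problem: no right triangle with integer sides has a
square as its area. -/
theorem diophantus20 :
    ¬ ∃ x y z t : ℤ, 0 < x ∧ 0 < y ∧ 0 < z ∧ 0 < t ∧
      x * x + y * y = z * z ∧ x * y = 2 * (t * t) := by
  rintro ⟨x, y, z, t, hx, hy, hz, ht, h1, h2⟩
  exact dio_main z.natAbs x y z t hx hy hz ht h1 h2 rfl
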